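/- Let X be a Banach space with the Daugavet property. Then the norm of X is octahedral: for every ε > 0 and every finite set x₁,…,x_n ∈ S_X there exists y ∈ S_X such that ‖x_i + λy‖ ≥ (1−ε)(1 + |λ|) for all i and all scalars λ ≥ 0. -/

import Mathlib

open Metric Set

lemma daugavet_slice {X : Type*} [NormedAddCommGroup X] [NormedSpace ℝ X]
    (hD : ∀ (g : X →L[ℝ] ℝ) (v : X),
      ‖ContinuousLinearMap.id ℝ X + g.smulRight v‖ = 1 + ‖g.smulRight v‖)
    (f : X →L[ℝ] ℝ) (hf : ‖f‖ = 1) (x : X) (hx : ‖x‖ = 1)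
    (δ : ℝ) (hδ : 0 < δ) :
    ∃ z : X, ‖z‖ ≤ 1 ∧ 1 - δ < f z ∧ 2 - 2*δ < ‖x + z‖ := by
  set T := f.smulRight x with hT
  have hTn : ‖T‖ = 1 := by
    rw [hT, ContinuousLinearMap.norm_smulRight_apply, hf, hx, one_mul]
  have hsum : ‖ContinuousLinearMap.id ℝ X + T‖ = 2 := by
    rw [hD f x, hTn]; norm_num
  have hlt : 2 - δ < ‖ContinuousLinearMap.id ℝ X + T‖ := by rw [hsum]; linarith
  obtain ⟨w, hw1, hw2⟩ := (ContinuousLinearMap.id ℝ X + T).exists_lt_apply_of_lt_opNorm hlt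
  have happ : ∀ v : X, (ContinuousLinearMap.id ℝ X + T) v = v + f v • x := by
    intro v; simp [hT, ContinuousLinearMap.smulRight_apply]
  set z : X := if 0 ≤ f w then w else -w with hz
  have hz1 : ‖z‖ ≤ 1 := by
    rw [hz]; split <;> simp [le_of_lt hw1, norm_neg] <;> linarith [hw1]
  have hfz0 : 0 ≤ f z := by
    rw [hz]; split
    · assumption
    · simp; linarith [lt_of_not_ge (by assumption : ¬ 0 ≤ f w)]
  have hzval : 2 - δ < ‖z + f z • x‖ := by
    rw [hz]; split
    · rw [← happ]; exact hw2
    · have : (-w : X) + f (-w) • x = -(w + f w • x) := by simp; abel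
      rw [this, norm_neg, ← happ]; exact hw2
  have hfz1 : f z ≤ 1 := by
    calc f z ≤ ‖f z‖ := le_abs_self _
    _ ≤ ‖f‖ * ‖z‖ := f.le_opNorm z
    _ ≤ 1 := by rw [hf]; simpa using hz1
  have hfz : 1 - δ < f z := by
    have : ‖z + f z • x‖ ≤ ‖z‖ + f z := by
      calc ‖z + f z • x‖ ≤ ‖z‖ + ‖f z • x‖ := norm_add_le _ _
      _ = ‖z‖ + |f z| * ‖x‖ := by rw [norm_smul]; rfl
      _ = ‖z‖ + f z := by rw [abs_of_nonneg hfz0, hx, mul_one]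
    linarith
  refine ⟨z, hz1, hfz, ?_⟩
  have key : x + z = (z + f z • x) + (1 - f z) • x := by
    rw [sub_smul, one_smul]; abel
  have : ‖x + z‖ ≥ ‖z + f z • x‖ - ‖(1 - f z) • x‖ := by
    rw [key]
    have h1 : ‖z + f z • x‖ ≤ ‖z + f z • x + (1 - f z) • x‖ + ‖(1 - f z) • x‖ := by
      calc ‖z + f z • x‖ = ‖(z + f z • x + (1 - f z) • x) - (1 - f z) • x‖ := by ring_nf; congr 1; abel
      _ ≤ _ := norm_sub_le _ _
    linarith
  have hn : ‖(1 - f z) • x‖ = 1 - f z := by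
    rw [norm_smul, hx, mul_one, Real.norm_eq_abs, abs_of_nonneg (by linarith)]
  rw [hn] at this
  linarith

set_option maxHeartbeats 2000000 in
lemma daugavet_multi {X : Type*} [NormedAddCommGroup X] [NormedSpace ℝ X]
    [CompleteSpace X]
    (hD : ∀ (g : X →L[ℝ] ℝ) (v : X),
      ‖ContinuousLinearMap.id ℝ X + g.smulRight v‖ = 1 + ‖g.smulRight v‖)
    (x0 : X) (hx0 : ‖x0‖ = 1) :
    ∀ (n : ℕ) (x : Fin n → X), (∀ i, ‖x i‖ = 1) →
      ∀ (f : X →L[ℝ] ℝ), ‖f‖ = 1 → ∀ δ : ℝ, 0 < δ → δ ≤ 1 →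
      ∃ y : X, ‖y‖ ≤ 1 ∧ 1 - δ < f y ∧ ∀ i, 2 - δ < ‖x i + y‖ := by
  intro n
  induction n with
  | zero =>
    intro x hx f hf δ hδ hδ1
    obtain ⟨z, hz1, hz2, _⟩ := daugavet_slice hD f hf x0 hx0 δ hδ
    exact ⟨z, hz1, hz2, fun i => i.elim0⟩
  | succ n IH =>
    intro x hx f hf δ hδ hδ1
    obtain ⟨δ', hδ'def⟩ : ∃ d : ℝ, d = δ / (2 * (n:ℝ) + 4) := ⟨_, rfl⟩
    have hδ'pos : 0 < δ' := by rw [hδ'def]; positivity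
    have hδ'le : (2 * (n:ℝ) + 4) * δ' = δ := by rw [hδ'def]; field_simp
    have hδ'1 : δ' ≤ 1 := by nlinarith [Nat.cast_nonneg (α := ℝ) n]
    have hδ'q : δ' ≤ 1/4 := by
      rw [hδ'def, div_le_iff₀ (by positivity)]
      nlinarith [Nat.cast_nonneg (α := ℝ) n]
    obtain ⟨y, hy1, hy2, hy3⟩ := IH (x ∘ Fin.castSucc) (fun i => hx _) f hf δ' hδ'pos hδ'1
    -- norming functionals for x i + y
    have hne : ∀ i : Fin n, x (Fin.castSucc i) + y ≠ 0 := by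
      intro i h
      have := hy3 i
      simp only [Function.comp_apply] at this
      rw [h] at this
      simp at this
      linarith
    have hgex : ∀ i : Fin n, ∃ g : X →L[ℝ] ℝ, ‖g‖ = 1 ∧
        g (x (Fin.castSucc i) + y) = ‖x (Fin.castSucc i) + y‖ :=
      fun i => exists_dual_vector ℝ _ (norm_ne_zero_iff.mpr (hne i))
    choose g hg1 hg2 using hgex
    have hgy : ∀ i, 1 - δ' < g i y := by
      intro i
      have h1 : 2 - δ' < g i (x (Fin.castSucc i) + y) := by
        rw [hg2 i]; exact hy3 i
      have h2 : g i (x (Fin.castSucc i)) ≤ 1 := by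
        calc g i (x (Fin.castSucc i)) ≤ ‖g i (x (Fin.castSucc i))‖ := le_abs_self _
        _ ≤ ‖g i‖ * ‖x (Fin.castSucc i)‖ := (g i).le_opNorm _
        _ = 1 := by rw [hg1 i, hx]; norm_num
      have := (g i).map_add (x (Fin.castSucc i)) y
      linarith [this ▸ h1]
    have hgx : ∀ i, 1 - δ' < g i (x (Fin.castSucc i)) := by
      intro i
      have h1 : 2 - δ' < g i (x (Fin.castSucc i) + y) := by
        rw [hg2 i]; exact hy3 i
      have h2 : g i y ≤ 1 := by
        calc g i y ≤ ‖g i y‖ := le_abs_self _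
        _ ≤ ‖g i‖ * ‖y‖ := (g i).le_opNorm _
        _ ≤ 1 := by rw [hg1 i]; simpa using hy1
      have := (g i).map_add (x (Fin.castSucc i)) y
      linarith [this ▸ h1]
    obtain ⟨h, hhdef⟩ : ∃ h : X →L[ℝ] ℝ, h = f + ∑ i : Fin n, g i := ⟨_, rfl⟩
    have hhy : ((n:ℝ) + 1) * (1 - δ') < h y := by
      have : h y = f y + ∑ i : Fin n, g i y := by
        simp [hhdef]
      rw [this]
      have hsum : (n:ℝ) * (1 - δ') ≤ ∑ i : Fin n, g i y := by
        have := Finset.card_nsmul_le_sum Finset.univ (fun i => g i y) (1 - δ')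
          (fun i _ => le_of_lt (hgy i))
        simpa [nsmul_eq_mul] using this
      linarith
    have hhnorm : ((n:ℝ) + 1) * (1 - δ') < ‖h‖ := by
      have : h y ≤ ‖h‖ * ‖y‖ := by
        calc h y ≤ ‖h y‖ := le_abs_self _
        _ ≤ ‖h‖ * ‖y‖ := h.le_opNorm y
      nlinarith [norm_nonneg h]
    have hhpos : 0 < ‖h‖ := by nlinarith [Nat.cast_nonneg (α := ℝ) n]
    have hhle : ‖h‖ ≤ (n:ℝ) + 1 := by
      calc ‖h‖ = ‖f + ∑ i : Fin n, g i‖ := by rw [hhdef]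
      _ ≤ ‖f‖ + ‖∑ i : Fin n, g i‖ := norm_add_le _ _
      _ ≤ ‖f‖ + ∑ i : Fin n, ‖g i‖ := by gcongr; exact norm_sum_le _ _
      _ = (n:ℝ) + 1 := by simp [hf, hg1]; ring
    obtain ⟨h', hh'def⟩ : ∃ h' : X →L[ℝ] ℝ, h' = ‖h‖⁻¹ • h := ⟨_, rfl⟩
    have hh'norm : ‖h'‖ = 1 := by
      rw [hh'def]
      rw [norm_smul (‖h‖⁻¹) h, norm_inv, norm_norm, inv_mul_cancel₀ (ne_of_gt hhpos)]
    obtain ⟨z, hz1, hz2, hz3⟩ := daugavet_slice hD h' hh'norm (x (Fin.last n))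
      (hx _) δ' hδ'pos
    have hh'z : h' z = ‖h‖⁻¹ * h z := by
      simp [hh'def, ContinuousLinearMap.smul_apply, smul_eq_mul]
    have hhz : ((n:ℝ) + 1) * (1 - 2*δ') < h z := by
      rw [hh'z] at hz2
      have h1 : ‖h‖ * (1 - δ') < ‖h‖ * (‖h‖⁻¹ * h z) := by
        exact mul_lt_mul_of_pos_left hz2 hhpos
      rw [← mul_assoc, mul_inv_cancel₀ (ne_of_gt hhpos), one_mul] at h1
      have e1 : ((n:ℝ)+1)*(1-δ') * (1-δ') ≤ ‖h‖ * (1-δ') :=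
        mul_le_mul_of_nonneg_right hhnorm.le (by linarith)
      have e2 : ((n:ℝ)+1) * (1 - 2*δ') ≤ ((n:ℝ)+1)*(1-δ') * (1-δ') := by
        nlinarith [Nat.cast_nonneg (α := ℝ) n, hδ'pos]
      linarith
    -- each functional value at z is bounded by 1
    have hbound : ∀ g' : X →L[ℝ] ℝ, ‖g'‖ = 1 → g' z ≤ 1 := by
      intro g' hg'
      calc g' z ≤ ‖g' z‖ := le_abs_self _
      _ ≤ ‖g'‖ * ‖z‖ := g'.le_opNorm _
      _ ≤ 1 := by rw [hg']; simpa using hz1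
    have hfz : 1 - (2*(n:ℝ)+2) * δ' < f z := by
      have hdecomp : h z = f z + ∑ i : Fin n, g i z := by simp [hhdef]
      have hsum : ∑ i : Fin n, g i z ≤ (n:ℝ) := by
        have := Finset.sum_le_card_nsmul Finset.univ (fun i => g i z) 1
          (fun i _ => hbound (g i) (hg1 i))
        simpa [nsmul_eq_mul] using this
      nlinarith [hhz, hdecomp ▸ hhz]
    have hgz : ∀ i, 1 - (2*(n:ℝ)+2) * δ' < g i z := by
      intro i
      have hdecomp : h z = f z + ∑ i : Fin n, g i z := by simp [hhdef]
      have hsplit : ∑ j : Fin n, g j z = g i z + ∑ j ∈ Finset.univ.erase i, g j z := by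
        exact (Finset.add_sum_erase _ _ (Finset.mem_univ i)).symm
      have hsum : ∑ j ∈ Finset.univ.erase i, g j z ≤ (n:ℝ) - 1 := by
        have hb := Finset.sum_le_card_nsmul (Finset.univ.erase i) (fun j => g j z) 1
          (fun j _ => hbound (g j) (hg1 j))
        have hcard : (Finset.univ.erase i).card = n - 1 := by
          rw [Finset.card_erase_of_mem (Finset.mem_univ i)]; simp
        rw [hcard] at hb
        have hn1 : 1 ≤ n := Fin.pos_iff_nonempty.mpr ⟨i⟩
        have hcast : ((n-1 : ℕ) : ℝ) = (n:ℝ) - 1 := by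
          push_cast [Nat.cast_sub hn1]; ring
        simp only [nsmul_eq_mul, mul_one] at hb
        rw [hcast] at hb
        exact hb
      have hfle : f z ≤ 1 := hbound f hf
      nlinarith [hhz, hdecomp ▸ hhz, hsplit]
    refine ⟨z, hz1, by nlinarith [hδ'le, hfz, hδ'pos], ?_⟩
    intro i
    refine Fin.lastCases ?_ ?_ i
    · have : 2 * δ' ≤ δ := by nlinarith [Nat.cast_nonneg (α := ℝ) n, hδ'pos]
      linarith [hz3]
    · intro j
      have h1 : 2 - δ' - (2*(n:ℝ)+2)*δ' < g j (x (Fin.castSucc j)) + g j z := by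
        linarith [hgx j, hgz j]
      have h2 : g j (x (Fin.castSucc j)) + g j z ≤ ‖x (Fin.castSucc j) + z‖ := by
        have := (g j).map_add (x (Fin.castSucc j)) z
        calc g j (x (Fin.castSucc j)) + g j z = g j (x (Fin.castSucc j) + z) := this.symm
        _ ≤ ‖g j (x (Fin.castSucc j) + z)‖ := le_abs_self _
        _ ≤ ‖g j‖ * ‖x (Fin.castSucc j) + z‖ := (g j).le_opNorm _
        _ = _ := by rw [hg1 j]; ring
      have h3 : (2*(n:ℝ)+3) * δ' < δ := by nlinarith [hδ'pos]
      nlinarith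

lemma octa_lambda {X : Type*} [NormedAddCommGroup X] [NormedSpace ℝ X]
    (x y : X) (hx : ‖x‖ = 1) (hy : ‖y‖ = 1) (η : ℝ) (hη : 0 ≤ η)
    (h : 2 - η ≤ ‖x + y‖) :
    ∀ lam : ℝ, 0 ≤ lam → (1 - η) * (1 + lam) ≤ ‖x + lam • y‖ := by
  intro lam hlam
  rcases le_or_gt lam 1 with hl | hl
  · have key : x + lam • y = (x + y) - (1 - lam) • y := by
      rw [sub_smul, one_smul]; abel
    have h1 : ‖x + y‖ - ‖(1 - lam) • y‖ ≤ ‖x + lam • y‖ := by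
      rw [key]; exact norm_sub_norm_le (x + y) ((1 - lam) • y)
    have h2 : ‖(1 - lam) • y‖ = 1 - lam := by
      rw [norm_smul, hy, mul_one, Real.norm_eq_abs, abs_of_nonneg (by linarith)]
    rw [h2] at h1
    nlinarith
  · have hlam0 : 0 < lam := by linarith
    have key : x + lam • y = lam • (lam⁻¹ • x + y) := by
      rw [smul_add, smul_smul, mul_inv_cancel₀ (ne_of_gt hlam0), one_smul]
    have key2 : lam⁻¹ • x + y = (x + y) - (1 - lam⁻¹) • x := by
      rw [sub_smul, one_smul]; abel
    have hinv : 0 < lam⁻¹ := by positivity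
    have hinv1 : lam⁻¹ ≤ 1 := by
      rw [inv_le_one_iff₀]; right; linarith
    have h1 : ‖lam⁻¹ • x + y‖ ≥ ‖x + y‖ - (1 - lam⁻¹) := by
      rw [key2]
      have := norm_sub_norm_le (x + y) ((1 - lam⁻¹) • x)
      have h2 : ‖(1 - lam⁻¹) • x‖ = 1 - lam⁻¹ := by
        rw [norm_smul, hx, mul_one, Real.norm_eq_abs, abs_of_nonneg (by linarith)]
      linarith
    have h3 : ‖x + lam • y‖ = lam * ‖lam⁻¹ • x + y‖ := by
      rw [key, norm_smul, Real.norm_eq_abs, abs_of_pos hlam0]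
    rw [h3]
    have h4 : lam * (‖x + y‖ - (1 - lam⁻¹)) ≤ lam * ‖lam⁻¹ • x + y‖ :=
      mul_le_mul_of_nonneg_left h1 hlam0.le
    have h5 : lam * (‖x + y‖ - (1 - lam⁻¹)) = lam * ‖x+y‖ - lam + 1 := by
      field_simp; ring
    nlinarith [h]

theorem stmt18 {X : Type*} [NormedAddCommGroup X] [NormedSpace ℝ X] [CompleteSpace X]
    (hD : ∀ (g : X →L[ℝ] ℝ) (v : X),
      ‖ContinuousLinearMap.id ℝ X + g.smulRight v‖ = 1 + ‖g.smulRight v‖) :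
    ∀ ε : ℝ, 0 < ε → ∀ (n : ℕ) (x : Fin n → X), (∀ i, ‖x i‖ = 1) →
      ∃ y : X, ‖y‖ = 1 ∧ ∀ i, ∀ lam : ℝ, 0 ≤ lam →
        (1 - ε) * (1 + lam) ≤ ‖x i + lam • y‖ := by
  intro ε hε n x hx
  -- X is nontrivial
  have hid : ‖ContinuousLinearMap.id ℝ X‖ = 1 := by
    have h0 : (0 : X →L[ℝ] ℝ).smulRight (0 : X) = 0 := by ext; simp
    have := hD 0 0
    rw [h0] at this
    simpa using this
  have hnt : Nontrivial X := by
    by_contra hcon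
    rw [not_nontrivial_iff_subsingleton] at hcon
    have : ContinuousLinearMap.id ℝ X = 0 := Subsingleton.elim _ _
    rw [this, norm_zero] at hid
    norm_num at hid
  obtain ⟨u, hu⟩ := exists_ne (0 : X)
  have hun : ‖u‖ ≠ 0 := norm_ne_zero_iff.mpr hu
  set x0 : X := ‖u‖⁻¹ • u with hx0def
  have hx0 : ‖x0‖ = 1 := by
    rw [hx0def, norm_smul, norm_inv, norm_norm, inv_mul_cancel₀ hun]
  have hx0ne : x0 ≠ 0 := by
    intro h; rw [h, norm_zero] at hx0; norm_num at hx0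
  obtain ⟨f, hf1, _⟩ := exists_dual_vector ℝ x0 (norm_ne_zero_iff.mpr hx0ne)
  set δ : ℝ := min (ε/2) (1/2) with hδdef
  have hδpos : 0 < δ := by positivity
  have hδ1 : δ ≤ 1/2 := min_le_right _ _
  have hδε : δ ≤ ε/2 := min_le_left _ _
  obtain ⟨y, hy1, hy2, hy3⟩ := daugavet_multi hD x0 hx0 n x hx f hf1 δ hδpos (by linarith)
  have hyn : 1 - δ < ‖y‖ := by
    have : f y ≤ ‖y‖ := by
      calc f y ≤ ‖f y‖ := le_abs_self _
      _ ≤ ‖f‖ * ‖y‖ := f.le_opNorm _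
      _ = ‖y‖ := by rw [hf1, one_mul]
    linarith
  have hypos : 0 < ‖y‖ := by linarith
  refine ⟨‖y‖⁻¹ • y, ?_, ?_⟩
  · rw [norm_smul, norm_inv, norm_norm, inv_mul_cancel₀ (ne_of_gt hypos)]
  intro i lam hlam
  set Y : X := ‖y‖⁻¹ • y with hYdef
  have hYn : ‖Y‖ = 1 := by
    rw [hYdef, norm_smul, norm_inv, norm_norm, inv_mul_cancel₀ (ne_of_gt hypos)]
  have hdiff : ‖Y - y‖ = 1 - ‖y‖ := by
    have : Y - y = (‖y‖⁻¹ - 1) • y := by rw [sub_smul, one_smul, hYdef]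
    rw [this, norm_smul, Real.norm_eq_abs]
    have hio : 1 ≤ ‖y‖⁻¹ := (one_le_inv₀ hypos).mpr hy1
    rw [abs_of_nonneg (by linarith)]
    field_simp
  have hclose : 2 - 2*δ ≤ ‖x i + Y‖ := by
    have h1 : ‖x i + y‖ ≤ ‖x i + Y‖ + ‖Y - y‖ := by
      have e : x i + y = (x i + Y) - (Y - y) := by abel
      rw [e]; exact norm_sub_le _ _
    rw [hdiff] at h1
    linarith [hy3 i]
  have := octa_lambda (x i) Y (hx i) hYn (2*δ) (by linarith) hclose lam hlam
  have hfac : (1 - ε) * (1 + lam) ≤ (1 - 2*δ) * (1 + lam) :=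
    mul_le_mul_of_nonneg_right (by linarith) (by linarith)
  linarith
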